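/- Let N ∈ ℕ, let M be a real symmetric positive semidefinite N×N matrix and W a diagonal positive definite N×N matrix with W − M positive semidefinite, let α > 0, β > 0, and c, λ̃ ∈ ℝ^N. Then the function λ ↦ (1/(2α))(λ − c)ᵀ M (λ − c) + (1/(2α))(λ − λ̃)ᵀ (W − M)(λ − λ̃) has a unique minimizer over the box [−β, β]^N, given by λ* = Π_{[−β,β]}(λ̃ + W⁻¹ M (c − λ̃)), where Π_{[−β,β]} is the componentwise clamp to [−β, β]. -/

import Mathlib

open Matrix

/-- Componentwise clamp of a vector to the interval `[lo, hi]`. -/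
def clampVec {N : ℕ} (lo hi : ℝ) (y : Fin N → ℝ) : Fin N → ℝ :=
  fun i => min (max (y i) lo) hi

lemma clamp_key (lo hi z x : ℝ) (hlohi : lo ≤ hi) (hx1 : lo ≤ x) (hx2 : x ≤ hi) :
    0 ≤ (x - min (max z lo) hi) * (min (max z lo) hi - z) := by
  rcases le_total z lo with h | h
  · rw [max_eq_right h, min_eq_left hlohi]
    exact mul_nonneg (by linarith) (by linarith)
  · rcases le_total hi z with h2 | h2
    · rw [min_eq_right (le_trans h2 (le_max_left _ _))]
      have : x - hi ≤ 0 := by linarith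
      have : hi - z ≤ 0 := by linarith
      nlinarith
    · rw [max_eq_left h, min_eq_left h2]
      simp

lemma expand_quad {N : ℕ} (A : Matrix (Fin N) (Fin N) ℝ) (hA : Aᵀ = A) (x y : Fin N → ℝ) :
    (x - y) ⬝ᵥ (A *ᵥ (x - y))
      = x ⬝ᵥ (A *ᵥ x) - 2 * (x ⬝ᵥ (A *ᵥ y)) + y ⬝ᵥ (A *ᵥ y) := by
  have hsym : y ⬝ᵥ (A *ᵥ x) = x ⬝ᵥ (A *ᵥ y) := by
    rw [Matrix.dotProduct_mulVec, ← Matrix.mulVec_transpose, hA, dotProduct_comm]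
  simp only [sub_dotProduct, Matrix.mulVec_sub, dotProduct_sub, hsym]
  ring

/-- Closed-form solution of the λ-subproblem in the discretized sGS-majorized ABCD
algorithm: the unique minimizer over the box `[−β, β]^N` of
`λ ↦ (1/(2α))(λ−c)ᵀM(λ−c) + (1/(2α))(λ−λ̃)ᵀ(W−M)(λ−λ̃)` is
`λ* = Π_{[−β,β]}(λ̃ + W⁻¹ M (c − λ̃))`. -/
theorem lambda_subproblem_closed_form
    (N : ℕ) (M W : Matrix (Fin N) (Fin N) ℝ)
    (hMpsd : M.PosSemidef) (hWdiag : W.IsDiag) (hWpd : W.PosDef)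
    (hWM : (W - M).PosSemidef)
    (α β : ℝ) (hα : 0 < α) (hβ : 0 < β) (c lamt : Fin N → ℝ) :
    clampVec (-β) β (lamt + W⁻¹ *ᵥ (M *ᵥ (c - lamt))) ∈ {l : Fin N → ℝ | ∀ i, |l i| ≤ β} ∧
    (∀ l ∈ {l : Fin N → ℝ | ∀ i, |l i| ≤ β},
        (1 / (2 * α)) * ((clampVec (-β) β (lamt + W⁻¹ *ᵥ (M *ᵥ (c - lamt))) - c) ⬝ᵥ
            (M *ᵥ (clampVec (-β) β (lamt + W⁻¹ *ᵥ (M *ᵥ (c - lamt))) - c)))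
          + (1 / (2 * α)) * ((clampVec (-β) β (lamt + W⁻¹ *ᵥ (M *ᵥ (c - lamt))) - lamt) ⬝ᵥ
            ((W - M) *ᵥ (clampVec (-β) β (lamt + W⁻¹ *ᵥ (M *ᵥ (c - lamt))) - lamt)))
        ≤ (1 / (2 * α)) * ((l - c) ⬝ᵥ (M *ᵥ (l - c)))
          + (1 / (2 * α)) * ((l - lamt) ⬝ᵥ ((W - M) *ᵥ (l - lamt)))) ∧
    (∀ l' ∈ {l : Fin N → ℝ | ∀ i, |l i| ≤ β},
        (∀ l ∈ {l : Fin N → ℝ | ∀ i, |l i| ≤ β},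
          (1 / (2 * α)) * ((l' - c) ⬝ᵥ (M *ᵥ (l' - c)))
            + (1 / (2 * α)) * ((l' - lamt) ⬝ᵥ ((W - M) *ᵥ (l' - lamt)))
          ≤ (1 / (2 * α)) * ((l - c) ⬝ᵥ (M *ᵥ (l - c)))
            + (1 / (2 * α)) * ((l - lamt) ⬝ᵥ ((W - M) *ᵥ (l - lamt)))) →
        l' = clampVec (-β) β (lamt + W⁻¹ *ᵥ (M *ᵥ (c - lamt)))) := by
  set z : Fin N → ℝ := lamt + W⁻¹ *ᵥ (M *ᵥ (c - lamt)) with hz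
  set p : Fin N → ℝ := clampVec (-β) β z with hp
  -- symmetry facts
  have hMsym : Mᵀ = M := hMpsd.1
  have hSsym : (W - M)ᵀ = W - M := hWM.1
  have hWsym : Wᵀ = W := by
    have := hWpd.1
    rw [Matrix.IsHermitian] at this
    simpa using this
  -- basic objective
  set g : (Fin N → ℝ) → ℝ :=
    fun l => (l - c) ⬝ᵥ (M *ᵥ (l - c)) + (l - lamt) ⬝ᵥ ((W - M) *ᵥ (l - lamt)) with hg
  -- W z = M c + (W - M) lamt
  have hdet : IsUnit W.det := hWpd.det_pos.ne'.isUnit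
  have hWz : W *ᵥ z = M *ᵥ c + (W - M) *ᵥ lamt := by
    rw [hz, Matrix.mulVec_add, Matrix.mulVec_mulVec, Matrix.mul_nonsing_inv W hdet,
      Matrix.one_mulVec, Matrix.mulVec_sub, Matrix.sub_mulVec]
    abel
  clear_value z
  -- key identity
  have hkey : ∀ l : Fin N → ℝ, g l = (l - z) ⬝ᵥ (W *ᵥ (l - z)) + g z := by
    intro l
    have hW1 : ∀ x : Fin N → ℝ,
        x ⬝ᵥ (W *ᵥ x) = x ⬝ᵥ (M *ᵥ x) + x ⬝ᵥ ((W - M) *ᵥ x) := by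
      intro x; simp [Matrix.sub_mulVec, dotProduct_sub]
    have hW2 : ∀ x : Fin N → ℝ,
        x ⬝ᵥ (W *ᵥ z) = x ⬝ᵥ (M *ᵥ c) + x ⬝ᵥ ((W - M) *ᵥ lamt) := by
      intro x; rw [hWz, dotProduct_add]
    rw [hg]
    simp only [expand_quad M hMsym, expand_quad (W - M) hSsym, expand_quad W hWsym,
      hW1 l, hW2 l]
    have h3 := hW1 z
    have h4 := hW2 z
    linarith
  -- diagonal entries positive
  have hWpos : ∀ i, 0 < W i i := by
    intro i
    have := hWpd.dotProduct_mulVec_pos (x := Pi.single i 1) (by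
      intro h
      have := congrFun h i
      simp at this)
    simpa [Matrix.mulVec, dotProduct, Pi.single_apply] using this
  -- quadratic form of W is componentwise sum
  have hWquad : ∀ v : Fin N → ℝ, v ⬝ᵥ (W *ᵥ v) = ∑ i, W i i * (v i) ^ 2 := by
    intro v
    simp only [dotProduct, Matrix.mulVec, dotProduct]
    refine Finset.sum_congr rfl fun i _ => ?_
    rw [Finset.sum_eq_single i]
    · ring
    · intro j _ hj
      rw [hWdiag (Ne.symm hj)]; ring
    · intro h; exact absurd (Finset.mem_univ i) h
  -- membership of p in the box
  have hβ' : -β ≤ β := by linarith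
  have hpmem : ∀ i, |p i| ≤ β := by
    intro i
    rw [abs_le]
    constructor
    · exact le_min (le_max_right _ _) hβ'
    · exact min_le_right _ _
  -- main componentwise inequality
  have hmain : ∀ l : Fin N → ℝ, (∀ i, |l i| ≤ β) →
      (p - z) ⬝ᵥ (W *ᵥ (p - z)) + ∑ i, W i i * (l i - p i) ^ 2
        ≤ (l - z) ⬝ᵥ (W *ᵥ (l - z)) := by
    intro l hl
    rw [hWquad, hWquad, ← Finset.sum_add_distrib]
    refine Finset.sum_le_sum fun i _ => ?_
    have hli := abs_le.mp (hl i)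
    have hck := clamp_key (-β) β (z i) (l i) hβ' hli.1 hli.2
    have hpi : p i = min (max (z i) (-β)) β := rfl
    have hw := hWpos i
    simp only [Pi.sub_apply, hpi] at *
    nlinarith [hck, hw]
  -- objective comparison scaled
  have hcoef : (0:ℝ) < 1 / (2 * α) := by positivity
  refine ⟨hpmem, ?_, ?_⟩
  · intro l hl
    have h1 : g p ≤ g l := by
      have := hmain l hl
      have hnn : (0:ℝ) ≤ ∑ i, W i i * (l i - p i) ^ 2 :=
        Finset.sum_nonneg fun i _ => mul_nonneg (hWpos i).le (sq_nonneg _)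
      have := hkey l
      have := hkey p
      linarith [hmain l hl, hkey l, hkey p]
    calc (1 / (2 * α)) * ((p - c) ⬝ᵥ (M *ᵥ (p - c)))
          + (1 / (2 * α)) * ((p - lamt) ⬝ᵥ ((W - M) *ᵥ (p - lamt)))
        = (1 / (2 * α)) * g p := by rw [hg]; ring
      _ ≤ (1 / (2 * α)) * g l := by
          exact mul_le_mul_of_nonneg_left h1 hcoef.le
      _ = (1 / (2 * α)) * ((l - c) ⬝ᵥ (M *ᵥ (l - c)))
          + (1 / (2 * α)) * ((l - lamt) ⬝ᵥ ((W - M) *ᵥ (l - lamt))) := by rw [hg]; ring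
  · intro l' hl' hmin
    have hfl : (1 / (2 * α)) * g l' ≤ (1 / (2 * α)) * g p := by
      have := hmin p hpmem
      rw [hg]
      calc (1 / (2 * α)) * ((l' - c) ⬝ᵥ (M *ᵥ (l' - c)) + (l' - lamt) ⬝ᵥ ((W - M) *ᵥ (l' - lamt)))
          = (1 / (2 * α)) * ((l' - c) ⬝ᵥ (M *ᵥ (l' - c)))
            + (1 / (2 * α)) * ((l' - lamt) ⬝ᵥ ((W - M) *ᵥ (l' - lamt))) := by ring
        _ ≤ (1 / (2 * α)) * ((p - c) ⬝ᵥ (M *ᵥ (p - c)))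
            + (1 / (2 * α)) * ((p - lamt) ⬝ᵥ ((W - M) *ᵥ (p - lamt))) := this
        _ = (1 / (2 * α)) * ((p - c) ⬝ᵥ (M *ᵥ (p - c)) + (p - lamt) ⬝ᵥ ((W - M) *ᵥ (p - lamt))) := by ring
    have hgl : g l' ≤ g p := le_of_mul_le_mul_left hfl hcoef
    have hsum0 : ∑ i, W i i * (l' i - p i) ^ 2 ≤ 0 := by
      have h1 := hmain l' hl'
      have h2 := hkey l'
      have h3 := hkey p
      linarith
    funext i
    have hterm : ∀ j ∈ Finset.univ, (0:ℝ) ≤ W j j * (l' j - p j) ^ 2 :=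
      fun j _ => mul_nonneg (hWpos j).le (sq_nonneg _)
    have hall := (Finset.sum_eq_zero_iff_of_nonneg hterm).mp
      (le_antisymm hsum0 (Finset.sum_nonneg hterm))
    have := hall i (Finset.mem_univ i)
    have hw := hWpos i
    have : (l' i - p i) ^ 2 = 0 := by
      by_contra h
      exact h (by nlinarith [sq_nonneg (l' i - p i)])
    have := pow_eq_zero_iff (n := 2) (by norm_num) |>.mp this
    linarith [this, sub_eq_zero.mp this]
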